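/- Let V be the (N+1)×(N+1) matrix whose k-th column consists of the coefficients of (1−t)^k(1+t)^{N−k}. Then V² = 2^N·I, i.e. V⁻¹ = 2^{−N}V, and det V = (−2)^{N(N+1)/2}. -/

import Mathlib

open Finset Matrix Polynomial Equiv

noncomputable def Mf (N j k : ℕ) : ℝ :=
  if N ≤ j + k then (-1) ^ (N - j + k) * (k.choose (N - j)) * 2 ^ (N - j) else 0

lemma natDeg_le (N k : ℕ) (hk : k ≤ N) :
    ((1 - X : Polynomial ℝ) ^ k * (1 + X) ^ (N - k)).natDegree ≤ N := by
  refine natDegree_mul_le.trans ?_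
  have h1 : (1 - X : Polynomial ℝ).natDegree ≤ 1 := by compute_degree
  have h2 : (1 + X : Polynomial ℝ).natDegree ≤ 1 := by compute_degree
  calc ((1 - X : Polynomial ℝ) ^ k).natDegree + ((1 + X : Polynomial ℝ) ^ (N - k)).natDegree
      ≤ k * 1 + (N - k) * 1 := by
        gcongr <;> [exact natDegree_pow_le_of_le k h1; exact natDegree_pow_le_of_le (N-k) h2]
    _ ≤ N := by omega

lemma key (N j : ℕ) (hj : j ≤ N) :
    ∑ k ∈ range (N + 1),
      C (((1 - X : Polynomial ℝ) ^ j * (1 + X) ^ (N - j)).coeff k) *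
        ((1 - X : Polynomial ℝ) ^ k * (1 + X) ^ (N - k))
      = C ((2 : ℝ) ^ N) * X ^ j := by
  set p : Polynomial ℝ := (1 - X) ^ j * (1 + X) ^ (N - j) with hp
  apply Polynomial.eq_of_infinite_eval_eq
  apply Set.Infinite.mono (s := {x : ℝ | x ≠ -1})
  swap
  · exact Set.Finite.infinite_compl (Set.finite_singleton _)
  intro x hx
  simp only [Set.mem_setOf_eq] at hx ⊢
  have hy : (1 : ℝ) + x ≠ 0 := by intro h; apply hx; linarith
  set y : ℝ := 1 + x with hydef
  set u : ℝ := (1 - x) / y with hu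
  have heval : ∀ q : Polynomial ℝ, q.natDegree ≤ N →
      eval u q = ∑ k ∈ range (N+1), q.coeff k * u ^ k := fun q hq =>
    eval_eq_sum_range' (lt_of_le_of_lt hq (Nat.lt_succ_self N)) u
  rw [eval_finset_sum]
  simp only [eval_mul, eval_pow, eval_C, eval_sub, eval_add, eval_one, eval_X]
  have hterm : ∀ k ∈ range (N+1),
      p.coeff k * ((1 - x) ^ k * (1 + x) ^ (N - k)) = (p.coeff k * u ^ k) * y ^ N := by
    intro k hk
    rw [mem_range] at hk
    have hkN : k ≤ N := Nat.lt_succ_iff.mp hk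
    have : y ^ N = y ^ k * y ^ (N - k) := by rw [← pow_add, Nat.add_sub_cancel' hkN]
    rw [this, hu, div_pow]
    field_simp
    ring
  rw [Finset.sum_congr rfl hterm, ← Finset.sum_mul, ← heval p (natDeg_le N j hj)]
  have hpu : eval u p = (1 - u) ^ j * (1 + u) ^ (N - j) := by
    simp [hp, eval_mul, eval_pow]
  have h1u : 1 - u = 2 * x / y := by rw [hu]; field_simp; ring
  have h2u : 1 + u = 2 / y := by rw [hu]; field_simp; ring
  rw [hpu, h1u, h2u]
  have hyj : y ^ j * y ^ (N - j) = y ^ N := by rw [← pow_add, Nat.add_sub_cancel' hj]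
  have h2j : (2:ℝ) ^ j * 2 ^ (N - j) = 2 ^ N := by rw [← pow_add, Nat.add_sub_cancel' hj]
  rw [div_pow, div_pow, div_mul_div_comm, mul_pow]
  rw [div_mul_eq_mul_div, div_eq_iff (by positivity : y ^ j * y ^ (N-j) ≠ 0)]
  rw [hyj, mul_right_comm ((2:ℝ)^j) (x^j), h2j]

lemma expand (N k : ℕ) (hk : k ≤ N) :
    (1 - X : Polynomial ℝ) ^ k * (1 + X) ^ (N - k)
      = ∑ j ∈ range (N + 1), C (Mf N j k) * (1 + X) ^ j := by
  have h1 : (1 - X : Polynomial ℝ) = 2 - (1 + X) := by ring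
  rw [h1, sub_pow, Finset.sum_mul]
  rw [← Finset.sum_range_reflect (fun j => C (Mf N j k) * (1 + X) ^ j) (N + 1)]
  rw [← Finset.sum_subset (Finset.range_subset_range.mpr (Nat.succ_le_succ hk))]
  · refine Finset.sum_congr rfl fun m hm => ?_
    rw [mem_range, Nat.lt_succ_iff] at hm
    have h2 : N + 1 - 1 - m = N - m := by omega
    rw [h2]
    have h3 : Mf N (N - m) k = (-1) ^ (m + k) * (k.choose m) * 2 ^ m := by
      unfold Mf
      have hc1 : N ≤ N - m + k := by omega
      rw [if_pos hc1]
      have h4 : N - (N - m) = m := by omega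
      rw [h4]
    rw [h3]
    have h5 : (1 + X : Polynomial ℝ) ^ (k - m) * (1 + X) ^ (N - k) = (1 + X) ^ (N - m) := by
      rw [← pow_add]; congr 1; omega
    simp only [_root_.map_mul, map_pow, map_neg, _root_.map_one, map_natCast, map_ofNat]
    rw [← h5]
    ring
  · intro m hm hnm
    rw [mem_range, Nat.lt_succ_iff] at hm
    rw [mem_range, Nat.lt_succ_iff] at hnm
    have h2 : N + 1 - 1 - m = N - m := by omega
    rw [h2]
    have : Mf N (N - m) k = 0 := by unfold Mf; rw [if_neg (by omega)]
    rw [this, map_zero, zero_mul]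

lemma rev_decomp (n : ℕ) :
    (Fin.revPerm : Perm (Fin (n + 1)))
      = finRotate (n + 1) * (finSuccEquivLast.symm.permCongr
          (Equiv.optionCongr (Fin.revPerm : Perm (Fin n)))) := by
  ext x : 1
  induction x using Fin.lastCases with
  | last => simp [Equiv.permCongr_apply, finRotate_last]
  | cast i =>
    simp only [Fin.revPerm_apply, Perm.mul_apply, Equiv.permCongr_apply, Equiv.symm_symm,
      finSuccEquivLast_castSucc, optionCongr_apply, Option.map_some,
      finSuccEquivLast_symm_some, Fin.revPerm_apply]
    rw [Fin.rev_castSucc, ← Fin.coeSucc_eq_succ, finRotate_succ_apply]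

lemma sign_revPerm : ∀ n : ℕ, Perm.sign (Fin.revPerm : Perm (Fin n)) = (-1) ^ n.choose 2
  | 0 => by
    have : (Fin.revPerm : Perm (Fin 0)) = 1 := Subsingleton.elim _ _
    simp [this]
  | (n + 1) => by
    rw [rev_decomp n, _root_.map_mul, sign_finRotate]
    have h1 : Perm.sign (finSuccEquivLast.symm.permCongr
        (Equiv.optionCongr (Fin.revPerm : Perm (Fin n))))
        = Perm.sign (Fin.revPerm : Perm (Fin n)) := by
      rw [Equiv.permCongr_def, Perm.sign_symm_trans_trans]
      exact Equiv.optionCongr_sign _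
    rw [h1, sign_revPerm n]
    rw [Nat.choose_succ_succ, Nat.choose_one_right, pow_add]
    rfl

/-- The eigenvector matrix V (columns = coefficients of (1−t)^k(1+t)^{N−k})
    satisfies V² = 2^N·I, hence V⁻¹ = 2^{−N}V, and det V = (−2)^{N(N+1)/2}. -/
theorem eigenvector_matrix_involution
    (N : ℕ) (V : Matrix (Fin (N + 1)) (Fin (N + 1)) ℝ)
    (hV : ∀ i k : Fin (N + 1), V i k =
      (((1 - X) ^ (k : ℕ) * (1 + X) ^ (N - (k : ℕ)) : Polynomial ℝ)).coeff i) :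
    V * V = (2 ^ N : ℝ) • (1 : Matrix (Fin (N + 1)) (Fin (N + 1)) ℝ) ∧
    V⁻¹ = ((2 : ℝ) ^ N)⁻¹ • V ∧
    V.det = (-2 : ℝ) ^ (N * (N + 1) / 2) := by
  have hVV : V * V = (2 ^ N : ℝ) • (1 : Matrix (Fin (N + 1)) (Fin (N + 1)) ℝ) := by
    ext i j
    rw [Matrix.mul_apply]
    have hj : (j : ℕ) ≤ N := Nat.lt_succ_iff.mp j.isLt
    have hsum : ∑ k : Fin (N+1), V i k * V k j
        = ∑ k ∈ range (N+1),
            (((1 - X : Polynomial ℝ) ^ (j:ℕ) * (1 + X) ^ (N - (j:ℕ))).coeff k) *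
            (((1 - X : Polynomial ℝ) ^ k * (1 + X) ^ (N - k)).coeff (i:ℕ)) := by
      rw [← Fin.sum_univ_eq_sum_range]
      refine Finset.sum_congr rfl fun k _ => ?_
      rw [hV i k, hV k j]
      ring
    rw [hsum]
    have hkey := congrArg (fun q : Polynomial ℝ => q.coeff (i:ℕ)) (key N j hj)
    simp only [finset_sum_coeff, coeff_C_mul, coeff_X_pow] at hkey
    rw [hkey]
    rw [Matrix.smul_apply, Matrix.one_apply]
    by_cases h : i = j <;> simp [h, Fin.val_eq_val, eq_comm]
  refine ⟨hVV, ?_, ?_⟩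
  · apply Matrix.inv_eq_right_inv
    rw [Matrix.mul_smul, hVV, smul_smul, inv_mul_cancel₀ (by positivity), one_smul]
  · -- determinant
    set A : Matrix (Fin (N+1)) (Fin (N+1)) ℝ := fun i j => ((j:ℕ).choose (i:ℕ) : ℝ) with hA
    set M : Matrix (Fin (N+1)) (Fin (N+1)) ℝ := fun j k => Mf N (j:ℕ) (k:ℕ) with hM
    have hVAM : V = A * M := by
      ext i k
      rw [Matrix.mul_apply, hV i k]
      have hk : (k : ℕ) ≤ N := Nat.lt_succ_iff.mp k.isLt
      rw [expand N k hk]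
      rw [finset_sum_coeff]
      simp only [coeff_C_mul, coeff_one_add_X_pow]
      rw [← Fin.sum_univ_eq_sum_range (fun j => Mf N j (k:ℕ) * ((j:ℕ).choose (i:ℕ) : ℝ))]
      refine Finset.sum_congr rfl fun j _ => ?_
      rw [hA, hM]
      ring
    have hdetA : A.det = 1 := by
      have hAtri : A.BlockTriangular id := by
        intro i j hij
        simp only [hA]
        rw [Nat.choose_eq_zero_of_lt (by exact_mod_cast hij), Nat.cast_zero]
      rw [Matrix.det_of_upperTriangular hAtri]
      simp [hA]
    have hdetW : (M.submatrix id (Fin.revPerm : Perm (Fin (N+1)))).det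
        = (2:ℝ) ^ (N * (N + 1) / 2) := by
      set W := M.submatrix id (Fin.revPerm : Perm (Fin (N+1))) with hW
      have hWtri : W.BlockTriangular OrderDual.toDual := by
        intro i j hij
        have hij' : (i : ℕ) < (j : ℕ) := hij
        simp only [hW, Matrix.submatrix_apply, id_eq, Fin.revPerm_apply]
        simp only [hM]
        unfold Mf
        rw [if_neg]
        rw [Fin.val_rev]
        omega
      rw [Matrix.det_of_lowerTriangular W hWtri]
      have hdiag : ∀ k : Fin (N+1), W k k = (2:ℝ) ^ (N - (k:ℕ)) := by
        intro k
        simp only [hW, Matrix.submatrix_apply, id_eq, Fin.revPerm_apply]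
        simp only [hM]
        unfold Mf
        rw [Fin.val_rev]
        have hk : (k:ℕ) ≤ N := Nat.lt_succ_iff.mp k.isLt
        have e0 : N + 1 - ((k:ℕ) + 1) = N - (k:ℕ) := by omega
        rw [e0, if_pos (by omega)]
        have e1 : ((-1:ℝ)) ^ (N - (k:ℕ) + (N - (k:ℕ))) = 1 := by
          rw [← two_mul, pow_mul]; norm_num
        rw [Nat.choose_self, e1, Nat.cast_one]; ring
      rw [Finset.prod_congr rfl (fun k _ => hdiag k), Finset.prod_pow_eq_pow_sum]
      congr 1
      rw [Fin.sum_univ_eq_sum_range (fun k => N - k) (N+1)]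
      have : ∑ k ∈ range (N+1), (N - k) = ∑ k ∈ range (N+1), k := by
        rw [← Finset.sum_range_reflect (fun k => k) (N+1)]
        refine Finset.sum_congr rfl fun m hm => ?_
        rw [mem_range, Nat.lt_succ_iff] at hm
        omega
      rw [this, Finset.sum_range_id]
      rw [Nat.mul_comm]
      simp
    have hsign := Matrix.det_permute' (Fin.revPerm : Perm (Fin (N+1))) M
    have hE : (N+1).choose 2 = N * (N + 1) / 2 := by
      rw [Nat.choose_two_right, Nat.succ_sub_one, Nat.mul_comm]
    have hc : (((Perm.sign (Fin.revPerm : Perm (Fin (N+1)))) : ℤ) : ℝ)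
        = (-1 : ℝ) ^ (N * (N + 1) / 2) := by
      rw [sign_revPerm, hE]
      push_cast
      simp
    rw [hdetW, hc] at hsign
    have hsq : ((-1:ℝ) ^ (N * (N + 1) / 2)) * ((-1:ℝ) ^ (N * (N + 1) / 2)) = 1 := by
      rw [← pow_add, ← two_mul, pow_mul]; norm_num
    have hdetM : M.det = (-1:ℝ) ^ (N * (N + 1) / 2) * 2 ^ (N * (N + 1) / 2) := by
      calc M.det = (((-1:ℝ) ^ (N * (N + 1) / 2)) * ((-1:ℝ) ^ (N * (N + 1) / 2))) * M.det := by
            rw [hsq, one_mul]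
        _ = (-1:ℝ) ^ (N * (N + 1) / 2) * 2 ^ (N * (N + 1) / 2) := by
            rw [mul_assoc, ← hsign]
    rw [hVAM, Matrix.det_mul, hdetA, one_mul, hdetM,
      show (-2:ℝ) = -1 * 2 by norm_num, mul_pow]
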